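/- (Theorem 2 (i), underestimation case) Suppose Δ′ < Δ < 0. Then ψ̃_Δ and ψ̃_{Δ′} each have a unique fixed point, β̂_Δ and β̂_{Δ′} respectively, and β* < β̂_Δ ≤ β̂_{Δ′}: the distortion β̂ − β* > 0 of the unique (stable) Berk–Nash equilibrium weakly increases when the underestimation |Δ| increases. -/

import Mathlib

open Set

/-- Strict monotonicity of β ↦ R (H β) β - R (H β) βstar on Ici βstar. -/
lemma aux_fmono
    (βstar : ℝ) (hs : 0 < βstar)
    (R : ℝ → ℝ → ℝ)
    (hRβ : ∀ h ∈ Ioc (0:ℝ) 1, StrictMonoOn (fun β => R h β) (Ici 0))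
    (hRid : ∀ h₁ h₂ β₁ β₂ : ℝ, 0 ≤ h₁ → h₁ < h₂ → h₂ ≤ 1 → 0 ≤ β₁ → β₁ < β₂ →
      R h₂ β₁ - R h₁ β₁ < R h₂ β₂ - R h₁ β₂)
    (H : ℝ → ℝ)
    (hHmono : StrictMonoOn H (Ici 0))
    (hHin : ∀ β > (0:ℝ), H β ∈ Ioo (0:ℝ) 1) :
    StrictMonoOn (fun β => R (H β) β - R (H β) βstar) (Ici βstar) := by
  intro a ha b hb hab
  have hapos : 0 < a := lt_of_lt_of_le hs ha
  have hbpos : 0 < b := lt_of_lt_of_le hs hb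
  have hHb : H b ∈ Ioo (0:ℝ) 1 := hHin b hbpos
  have hmonob : StrictMonoOn (fun β => R (H b) β) (Ici 0) :=
    hRβ (H b) ⟨hHb.1, hHb.2.le⟩
  rcases eq_or_lt_of_le (mem_Ici.mp ha) with h1 | h1
  · -- βstar = a
    have h2 : R (H b) βstar < R (H b) b :=
      hmonob (le_of_lt hs) (le_of_lt hbpos) (lt_of_le_of_lt h1.le hab)
    have h3 : R (H a) a - R (H a) βstar = 0 := by rw [← h1, sub_self]
    show R (H a) a - R (H a) βstar < R (H b) b - R (H b) βstar
    rw [h3]; linarith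
  · -- βstar < a
    have hHa : H a ∈ Ioo (0:ℝ) 1 := hHin a hapos
    have hHlt : H a < H b := hHmono hapos.le hbpos.le hab
    have h2 : R (H b) βstar - R (H a) βstar < R (H b) a - R (H a) a :=
      hRid (H a) (H b) βstar a hHa.1.le hHlt hHb.2.le hs.le h1
    have h3 : R (H b) a < R (H b) b := hmonob hapos.le hbpos.le hab
    show R (H a) a - R (H a) βstar < R (H b) b - R (H b) βstar
    linarith

/-- Existence, uniqueness and location of the fixed point for a single D < 0. -/
lemma aux_fixed
    (βlo βstar βhi : ℝ)
    (hlo : 0 < βlo) (hls : βlo < βstar) (hsh : βstar < βhi)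
    (R : ℝ → ℝ → ℝ)
    (hRcont : ContinuousOn (fun p : ℝ × ℝ => R p.1 p.2) (Icc (0:ℝ) 1 ×ˢ Ici (0:ℝ)))
    (hRβ : ∀ h ∈ Ioc (0:ℝ) 1, StrictMonoOn (fun β => R h β) (Ici 0))
    (hRid : ∀ h₁ h₂ β₁ β₂ : ℝ, 0 ≤ h₁ → h₁ < h₂ → h₂ ≤ 1 → 0 ≤ β₁ → β₁ < β₂ →
      R h₂ β₁ - R h₁ β₁ < R h₂ β₂ - R h₁ β₂)
    (H : ℝ → ℝ)
    (hHcont : ContinuousOn H (Ici 0))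
    (hHmono : StrictMonoOn H (Ici 0))
    (hHin : ∀ β > (0:ℝ), H β ∈ Ioo (0:ℝ) 1)
    (ψ : ℝ → ℝ → ℝ)
    (hψ : ∀ Δ : ℝ, ∀ β ∈ Icc βlo βhi,
      ψ Δ β ∈ Icc βlo βhi ∧
      ∀ x ∈ Icc βlo βhi, x ≠ ψ Δ β →
        |Δ + R (H β) (ψ Δ β) - R (H β) βstar| < |Δ + R (H β) x - R (H β) βstar|)
    (D : ℝ) (hD : D < 0) :
    ∃ b, b ∈ Icc βlo βhi ∧ ψ D b = b ∧ (∀ x ∈ Icc βlo βhi, ψ D x = x → x = b) ∧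
      βstar < b ∧
      (D + R (H b) b - R (H b) βstar = 0 ∨
        (b = βhi ∧ D + R (H βhi) βhi - R (H βhi) βstar ≤ 0)) := by
  have hspos : (0:ℝ) < βstar := lt_trans hlo hls
  have hlohi : βlo < βhi := lt_trans hls hsh
  -- continuity of x ↦ D + R (H β) x - R (H β) βstar on Ici 0, for β > 0
  have hgcont : ∀ β > (0:ℝ), ContinuousOn (fun x => D + R (H β) x - R (H β) βstar) (Ici 0) := by
    intro β hβ
    have hHβ : H β ∈ Ioo (0:ℝ) 1 := hHin β hβ
    have h1 : ContinuousOn (fun x : ℝ => R (H β) x) (Ici 0) :=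
      hRcont.comp
        (Continuous.continuousOn (continuous_const.prodMk continuous_id))
        (fun x hx => ⟨⟨hHβ.1.le, hHβ.2.le⟩, hx⟩)
    exact (continuousOn_const.add h1).sub continuousOn_const
  -- continuity of β ↦ D + R (H β) β - R (H β) βstar on Ici βlo
  have hfcont : ContinuousOn (fun β => D + R (H β) β - R (H β) βstar) (Ici βlo) := by
    have hHc : ContinuousOn H (Ici βlo) := hHcont.mono (fun x hx => le_trans hlo.le hx)
    have h1 : ContinuousOn (fun β : ℝ => R (H β) β) (Ici βlo) :=
      hRcont.comp (ContinuousOn.prodMk hHc continuousOn_id)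
        (fun β hβ => by
          have hβpos : 0 < β := lt_of_lt_of_le hlo hβ
          have := hHin β hβpos
          exact ⟨⟨this.1.le, this.2.le⟩, hβpos.le⟩)
    have h2 : ContinuousOn (fun β : ℝ => R (H β) βstar) (Ici βlo) :=
      hRcont.comp (ContinuousOn.prodMk hHc continuousOn_const)
        (fun β hβ => by
          have hβpos : 0 < β := lt_of_lt_of_le hlo hβ
          have := hHin β hβpos
          exact ⟨⟨this.1.le, this.2.le⟩, hspos.le⟩)
    exact (continuousOn_const.add h1).sub h2
  have hfmono : StrictMonoOn (fun β => D + R (H β) β - R (H β) βstar) (Ici βstar) := by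
    intro a ha b hb hab
    have h := aux_fmono βstar hspos R hRβ hRid H hHmono hHin ha hb hab
    have h' : R (H a) a - R (H a) βstar < R (H b) b - R (H b) βstar := h
    show D + R (H a) a - R (H a) βstar < D + R (H b) b - R (H b) βstar
    linarith
  -- value ≤ D on [βlo, βstar]
  have hfneg : ∀ z ∈ Icc βlo βhi, z ≤ βstar → D + R (H z) z - R (H z) βstar ≤ D := by
    intro z hz hzs
    have hzpos : 0 < z := lt_of_lt_of_le hlo hz.1
    have hHz : H z ∈ Ioo (0:ℝ) 1 := hHin z hzpos
    have hmono : MonotoneOn (fun β => R (H z) β) (Ici 0) :=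
      (hRβ (H z) ⟨hHz.1, hHz.2.le⟩).monotoneOn
    have : R (H z) z ≤ R (H z) βstar := hmono hzpos.le hspos.le hzs
    linarith
  -- strict mono in x for fixed β > 0
  have hgmono : ∀ β > (0:ℝ), ∀ a ∈ Ici (0:ℝ), ∀ b ∈ Ici (0:ℝ), a < b →
      D + R (H β) a - R (H β) βstar < D + R (H β) b - R (H β) βstar := by
    intro β hβ a ha b hb hab
    have hHβ : H β ∈ Ioo (0:ℝ) 1 := hHin β hβ
    have : R (H β) a < R (H β) b := hRβ (H β) ⟨hHβ.1, hHβ.2.le⟩ ha hb hab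
    linarith
  -- characterization of fixed points
  have key : ∀ β ∈ Icc βlo βhi, ψ D β = β →
      (D + R (H β) β - R (H β) βstar = 0 ∨
        (β = βhi ∧ D + R (H βhi) βhi - R (H βhi) βstar ≤ 0)) := by
    intro β hβ hfix
    have hβpos : 0 < β := lt_of_lt_of_le hlo hβ.1
    obtain ⟨-, hmin⟩ := hψ D β hβ
    rw [hfix] at hmin
    rcases lt_trichotomy (D + R (H β) β - R (H β) βstar) 0 with hneg | hzero | hpos
    · right
      rcases eq_or_lt_of_le hβ.2 with heq | hlt
      · exact ⟨heq, by rw [← heq]; exact hneg.le⟩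
      · exfalso
        rcases le_or_gt (D + R (H β) βhi - R (H β) βstar) 0 with hc | hc
        · have h1 := hmin βhi ⟨hlohi.le, le_refl _⟩ (ne_of_gt hlt)
          have h2 : D + R (H β) β - R (H β) βstar < D + R (H β) βhi - R (H β) βstar :=
            hgmono β hβpos β hβpos.le βhi (le_of_lt (lt_trans hβpos hlt)) hlt
          rw [abs_of_neg hneg, abs_of_nonpos hc] at h1
          linarith
        · have hivt : (0:ℝ) ∈ Icc (D + R (H β) β - R (H β) βstar)
              (D + R (H β) βhi - R (H β) βstar) := ⟨hneg.le, hc.le⟩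
          obtain ⟨x, hx, hx0⟩ :=
            intermediate_value_Icc hlt.le
              ((hgcont β hβpos).mono (fun x hx => le_trans hβpos.le hx.1)) hivt
          have hx0' : D + R (H β) x - R (H β) βstar = 0 := hx0
          have hxne : x ≠ β := by intro h; rw [h] at hx0'; linarith
          have h1 := hmin x ⟨le_trans hβ.1 hx.1, hx.2⟩ hxne
          rw [hx0'] at h1
          simp only [abs_zero] at h1
          have := abs_nonneg (D + R (H β) β - R (H β) βstar)
          linarith
    · exact Or.inl hzero
    · exfalso
      have hβs : βstar < β := by
        by_contra hle
        push_neg at hle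
        have := hfneg β hβ hle
        linarith
      have hgstar : D + R (H β) βstar - R (H β) βstar = D := by ring
      have hivt : (0:ℝ) ∈ Icc (D + R (H β) βstar - R (H β) βstar)
          (D + R (H β) β - R (H β) βstar) := ⟨by rw [hgstar]; exact hD.le, hpos.le⟩
      obtain ⟨x, hx, hx0⟩ :=
        intermediate_value_Icc hβs.le
          ((hgcont β hβpos).mono (fun x hx => le_trans hspos.le hx.1)) hivt
      have hx0' : D + R (H β) x - R (H β) βstar = 0 := hx0
      have hxne : x ≠ β := by intro h; rw [h] at hx0'; linarith
      have h1 := hmin x ⟨le_trans hls.le hx.1, le_trans hx.2 hβ.2⟩ hxne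
      rw [hx0'] at h1
      simp only [abs_zero] at h1
      have := abs_nonneg (D + R (H β) β - R (H β) βstar)
      linarith
  -- existence
  by_cases hc : D + R (H βhi) βhi - R (H βhi) βstar ≤ 0
  · -- the fixed point is βhi
    have hβhi : βhi ∈ Icc βlo βhi := ⟨hlohi.le, le_refl _⟩
    have hfix : ψ D βhi = βhi := by
      obtain ⟨hy, hmin⟩ := hψ D βhi hβhi
      by_contra hne
      have hylt : ψ D βhi < βhi := lt_of_le_of_ne hy.2 hne
      have hypos : 0 < ψ D βhi := lt_of_lt_of_le hlo hy.1
      have h1 := hmin βhi hβhi (Ne.symm hne)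
      have h2 : D + R (H βhi) (ψ D βhi) - R (H βhi) βstar <
          D + R (H βhi) βhi - R (H βhi) βstar :=
        hgmono βhi (lt_trans hspos hsh) (ψ D βhi) hypos.le βhi
          (le_of_lt (lt_trans hspos hsh)) hylt
      rw [abs_of_nonpos (by linarith), abs_of_nonpos hc] at h1
      linarith
    refine ⟨βhi, hβhi, hfix, ?_, hsh, Or.inr ⟨rfl, hc⟩⟩
    intro x hx hfixx
    rcases key x hx hfixx with h0 | ⟨heq, -⟩
    · rcases eq_or_lt_of_le hx.2 with heq | hlt
      · exact heq
      · exfalso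
        have hxs : βstar < x := by
          by_contra hle
          push_neg at hle
          have := hfneg x hx hle
          linarith
        have h := hfmono (le_of_lt hxs) (le_of_lt (lt_trans hxs hlt)) hlt
        have h' : D + R (H x) x - R (H x) βstar <
            D + R (H βhi) βhi - R (H βhi) βstar := h
        linarith
    · exact heq
  · push_neg at hc
    have hfstar : D + R (H βstar) βstar - R (H βstar) βstar = D := by ring
    have hivt : (0:ℝ) ∈ Icc (D + R (H βstar) βstar - R (H βstar) βstar)
        (D + R (H βhi) βhi - R (H βhi) βstar) := ⟨by rw [hfstar]; exact hD.le, hc.le⟩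
    obtain ⟨b, hb, hb0⟩ :=
      intermediate_value_Icc hsh.le (hfcont.mono (fun x hx => le_trans hls.le hx.1)) hivt
    have hb0' : D + R (H b) b - R (H b) βstar = 0 := hb0
    have hbmem : b ∈ Icc βlo βhi := ⟨le_trans hls.le hb.1, hb.2⟩
    have hbs : βstar < b := by
      rcases eq_or_lt_of_le hb.1 with heq | h
      · exfalso; rw [← heq] at hb0'; rw [hfstar] at hb0'; linarith
      · exact h
    have hfix : ψ D b = b := by
      obtain ⟨hy, hmin⟩ := hψ D b hbmem
      by_contra hne
      have h1 := hmin b hbmem (Ne.symm hne)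
      rw [hb0'] at h1
      simp only [abs_zero] at h1
      have := abs_nonneg (D + R (H b) (ψ D b) - R (H b) βstar)
      linarith
    refine ⟨b, hbmem, hfix, ?_, hbs, Or.inl hb0'⟩
    intro x hx hfixx
    rcases key x hx hfixx with h0 | ⟨heq, habs⟩
    · have hxs : βstar < x := by
        by_contra hle
        push_neg at hle
        have := hfneg x hx hle
        linarith
      exact hfmono.injOn (le_of_lt hxs) (le_of_lt hbs)
        (by show D + R (H x) x - R (H x) βstar = D + R (H b) b - R (H b) βstar
            rw [h0, hb0'])
    · exfalso; linarith

theorem stmt_10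
    (βlo βstar βhi : ℝ)
    (hlo : 0 < βlo) (hls : βlo < βstar) (hsh : βstar < βhi)
    (R : ℝ → ℝ → ℝ)
    (hRcont : ContinuousOn (fun p : ℝ × ℝ => R p.1 p.2) (Icc (0:ℝ) 1 ×ˢ Ici (0:ℝ)))
    (hR0 : ∀ h ∈ Icc (0:ℝ) 1, R h 0 = 0)
    (hR0' : ∀ β ∈ Ici (0:ℝ), R 0 β = 0)
    (hRβ : ∀ h ∈ Ioc (0:ℝ) 1, StrictMonoOn (fun β => R h β) (Ici 0))
    (hRh : ∀ β > (0:ℝ), StrictMonoOn (fun h => R h β) (Icc 0 1))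
    (hRid : ∀ h₁ h₂ β₁ β₂ : ℝ, 0 ≤ h₁ → h₁ < h₂ → h₂ ≤ 1 → 0 ≤ β₁ → β₁ < β₂ →
      R h₂ β₁ - R h₁ β₁ < R h₂ β₂ - R h₁ β₂)
    (H : ℝ → ℝ)
    (hHcont : ContinuousOn H (Ici 0))
    (hHmono : StrictMonoOn H (Ici 0))
    (hH0 : H 0 = 0)
    (hHin : ∀ β > (0:ℝ), H β ∈ Ioo (0:ℝ) 1)
    (ψ : ℝ → ℝ → ℝ)
    (hψ : ∀ Δ : ℝ, ∀ β ∈ Icc βlo βhi,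
      ψ Δ β ∈ Icc βlo βhi ∧
      ∀ x ∈ Icc βlo βhi, x ≠ ψ Δ β →
        |Δ + R (H β) (ψ Δ β) - R (H β) βstar| < |Δ + R (H β) x - R (H β) βstar|)
    (Δ Δ' : ℝ) (hΔ' : Δ' < Δ) (hΔ : Δ < 0) :
    ∃ bΔ bΔ' : ℝ,
      (bΔ ∈ Icc βlo βhi ∧ ψ Δ bΔ = bΔ ∧ ∀ x ∈ Icc βlo βhi, ψ Δ x = x → x = bΔ) ∧
      (bΔ' ∈ Icc βlo βhi ∧ ψ Δ' bΔ' = bΔ' ∧ ∀ x ∈ Icc βlo βhi, ψ Δ' x = x → x = bΔ') ∧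
      βstar < bΔ ∧ bΔ ≤ bΔ' := by
  have hspos : (0:ℝ) < βstar := lt_trans hlo hls
  obtain ⟨b, hbmem, hbfix, hbuniq, hbs, hbchar⟩ :=
    aux_fixed βlo βstar βhi hlo hls hsh R hRcont hRβ hRid H hHcont hHmono hHin ψ hψ Δ hΔ
  obtain ⟨b', hbmem', hbfix', hbuniq', hbs', hbchar'⟩ :=
    aux_fixed βlo βstar βhi hlo hls hsh R hRcont hRβ hRid H hHcont hHmono hHin ψ hψ Δ'
      (lt_trans hΔ' hΔ)
  refine ⟨b, b', ⟨hbmem, hbfix, hbuniq⟩, ⟨hbmem', hbfix', hbuniq'⟩, hbs, ?_⟩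
  have hfmono := aux_fmono βstar hspos R hRβ hRid H hHmono hHin
  rcases hbchar' with h0' | ⟨heq', -⟩
  · have hpos : 0 < Δ + R (H b') b' - R (H b') βstar := by linarith
    rcases hbchar with h0 | ⟨heq, habs⟩
    · by_contra hle
      push_neg at hle
      have h := hfmono (le_of_lt hbs') (le_of_lt hbs) hle
      have h' : R (H b') b' - R (H b') βstar < R (H b) b - R (H b) βstar := h
      linarith
    · rcases eq_or_lt_of_le hbmem'.2 with heq2 | hlt
      · rw [heq, ← heq2]
      · exfalso
        have h := hfmono (le_of_lt hbs') hsh.le hlt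
        have h' : R (H b') b' - R (H b') βstar < R (H βhi) βhi - R (H βhi) βstar := h
        linarith
  · rw [heq']; exact hbmem.2
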